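/- In an ARAT discounted Markov game (additive rewards and additive transitions: Q(D|x,a₁,a₂)=∫_D[q₁(y,x,a₁)+q₂(y,x,a₂)]λ(dy)), for every initial distribution η and every pair of history-dependent policies (π₁,π₂) there exists a pair of stationary Markov policies (π₁′,π₂′) such that the (X×A₁)-marginal and the (X×A₂)-marginal of the occupation measure μ_{η,π₁,π₂} coincide with those of μ_{η,π₁′,π₂′}. Moreover, if π_i is already stationary Markov, one can take π_i′ = π_i. -/

import Mathlib

open MeasureTheory ProbabilityTheory Filter Topology
open scoped NNReal ENNReal

universe u

/-- The space of histories `H_t = (X × A₁ × A₂)^t × X`, built recursively: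
`H_0 = X` and `H_{t+1} = H_t × (A₁ × A₂) × X`. -/
def Hist (X A₁ A₂ : Type u) : ℕ → Type u
  | 0 => X
  | t + 1 => Hist X A₁ A₂ t × (A₁ × A₂) × X

noncomputable instance histMeasurableSpace {X A₁ A₂ : Type u} [MeasurableSpace X]
    [MeasurableSpace A₁] [MeasurableSpace A₂] :
    ∀ t, MeasurableSpace (Hist X A₁ A₂ t)
  | 0 => ‹MeasurableSpace X›
  | t + 1 =>
    letI := histMeasurableSpace (X := X) (A₁ := A₁) (A₂ := A₂) t
    inferInstanceAs (MeasurableSpace (Hist X A₁ A₂ t × (A₁ × A₂) × X))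

/-- The current state `x_t` of a history `h_t ∈ H_t`. -/
def curState {X A₁ A₂ : Type u} : ∀ t, Hist X A₁ A₂ t → X
  | 0 => id
  | _ + 1 => fun h => h.2.2

lemma measurable_curState {X A₁ A₂ : Type u} [MeasurableSpace X]
    [MeasurableSpace A₁] [MeasurableSpace A₂] :
    ∀ t, Measurable (curState (X := X) (A₁ := A₁) (A₂ := A₂) t)
  | 0 => measurable_id
  | _ + 1 => measurable_snd.comp measurable_snd

/-- The distribution on histories `H_t` induced by the initial distribution `η`, the
transition kernel `Q` and the history-dependent policies `(π₁, π₂)`: the initial state has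
distribution `η`, at each stage the actions are drawn independently from `π₁^t(·|h_t)` and
`π₂^t(·|h_t)`, and the next state from `Q(·|x_t, a_t, b_t)`. -/
noncomputable def traj {X A₁ A₂ : Type u} [MeasurableSpace X]
    [MeasurableSpace A₁] [MeasurableSpace A₂]
    (η : Measure X) (Q : Kernel (X × A₁ × A₂) X)
    (π₁ : ∀ t, Kernel (Hist X A₁ A₂ t) A₁) (π₂ : ∀ t, Kernel (Hist X A₁ A₂ t) A₂) :
    ∀ t, Measure (Hist X A₁ A₂ t)
  | 0 => η
  | t + 1 =>
    (traj η Q π₁ π₂ t) ⊗ₘ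
      ((π₁ t ×ₖ π₂ t) ⊗ₖ
        (Q.comap (fun p : Hist X A₁ A₂ t × (A₁ × A₂) => (curState t p.1, p.2))
          (((measurable_curState t).comp measurable_fst).prodMk measurable_snd)))

/-- The joint law of the state-action triple `(X_t, A_t, B_t)` at time `t`. -/
noncomputable def stepLaw {X A₁ A₂ : Type u} [MeasurableSpace X]
    [MeasurableSpace A₁] [MeasurableSpace A₂]
    (η : Measure X) (Q : Kernel (X × A₁ × A₂) X)
    (π₁ : ∀ t, Kernel (Hist X A₁ A₂ t) A₁) (π₂ : ∀ t, Kernel (Hist X A₁ A₂ t) A₂)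
    (t : ℕ) : Measure (X × A₁ × A₂) :=
  (traj η Q π₁ π₂ (t + 1)).map
    (fun h : Hist X A₁ A₂ t × (A₁ × A₂) × X => (curState t h.1, h.2.1))

/-- The occupation measure of the pair of history-dependent policies `(π₁, π₂)` with initial
distribution `η`: `μ_{η,π₁,π₂} = (1-β) ∑_t β^t law(X_t, A_t, B_t)`. -/
noncomputable def occHD {X A₁ A₂ : Type u} [MeasurableSpace X]
    [MeasurableSpace A₁] [MeasurableSpace A₂]
    (β : ℝ≥0) (η : Measure X) (Q : Kernel (X × A₁ × A₂) X)
    (π₁ : ∀ t, Kernel (Hist X A₁ A₂ t) A₁) (π₂ : ∀ t, Kernel (Hist X A₁ A₂ t) A₂) :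
    Measure (X × A₁ × A₂) :=
  Measure.sum fun t : ℕ => ((1 - β) * β ^ t) • stepLaw η Q π₁ π₂ t
/-- One-step transition operator on measures for the pair of stationary Markov policies
`(π₁, π₂)`:  `γ ↦ γ Q_{π₁,π₂}`. -/
noncomputable def gstep {X A₁ A₂ : Type*} [MeasurableSpace X] [MeasurableSpace A₁]
    [MeasurableSpace A₂] (Q : Kernel (X × A₁ × A₂) X)
    (π₁ : Kernel X A₁) (π₂ : Kernel X A₂) (γ : Measure X) : Measure X :=
  γ.bind fun x => ((π₁ ×ₖ π₂) x).bind fun a => Q (x, a)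

/-- The `X`-marginal of the occupation measure of `(π₁, π₂)` with initial distribution `η`:
`(1-β) ∑_t β^t η Q^t_{π₁,π₂}`. -/
noncomputable def occX {X A₁ A₂ : Type*} [MeasurableSpace X] [MeasurableSpace A₁]
    [MeasurableSpace A₂] (β : ℝ≥0) (Q : Kernel (X × A₁ × A₂) X)
    (π₁ : Kernel X A₁) (π₂ : Kernel X A₂) (η : Measure X) : Measure X :=
  Measure.sum fun t : ℕ => ((1 - β) * β ^ t) • (gstep Q π₁ π₂)^[t] η

/-- The occupation measure on `X × A₁ × A₂` of the stationary Markov pair `(π₁, π₂)`. -/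
noncomputable def occ {X A₁ A₂ : Type*} [MeasurableSpace X] [MeasurableSpace A₁]
    [MeasurableSpace A₂] (β : ℝ≥0) (Q : Kernel (X × A₁ × A₂) X)
    (π₁ : Kernel X A₁) (π₂ : Kernel X A₂) (η : Measure X) : Measure (X × A₁ × A₂) :=
  (occX β Q π₁ π₂ η) ⊗ₘ (π₁ ×ₖ π₂)

/-- The `(X × A₁)`-marginal of the occupation measure: `μ^X_{η,π₁,π₂} ⊗ π₁`. -/
noncomputable def occ1 {X A₁ A₂ : Type*} [MeasurableSpace X] [MeasurableSpace A₁]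
    [MeasurableSpace A₂] (β : ℝ≥0) (Q : Kernel (X × A₁ × A₂) X)
    (π₁ : Kernel X A₁) (π₂ : Kernel X A₂) (η : Measure X) : Measure (X × A₁) :=
  (occX β Q π₁ π₂ η) ⊗ₘ π₁

/-- The `(X × A₂)`-marginal of the occupation measure: `μ^X_{η,π₁,π₂} ⊗ π₂`. -/
noncomputable def occ2 {X A₁ A₂ : Type*} [MeasurableSpace X] [MeasurableSpace A₁]
    [MeasurableSpace A₂] (β : ℝ≥0) (Q : Kernel (X × A₁ × A₂) X)
    (π₁ : Kernel X A₁) (π₂ : Kernel X A₂) (η : Measure X) : Measure (X × A₂) :=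
  (occX β Q π₁ π₂ η) ⊗ₘ π₂



section Selection
open EMetric in

lemma graph_meas {X A : Type*} [MeasurableSpace X] [MetricSpace A] [CompactSpace A]
    [MeasurableSpace A] [BorelSpace A] [Nonempty A] (Fa : X → Set A)
    (hmeas : ∀ U : Set A, IsOpen U → MeasurableSet {x | (Fa x ∩ U).Nonempty})
    (hcl : ∀ x, IsClosed (Fa x)) :
    MeasurableSet {p : X × A | p.2 ∈ Fa p.1} := by
  have h1 : ∀ a : A, Measurable fun x => Metric.infEDist a (Fa x) := by
    intro a
    apply measurable_of_Iio
    intro r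
    have : (fun x => Metric.infEDist a (Fa x)) ⁻¹' Set.Iio r
        = {x | (Fa x ∩ EMetric.ball a r).Nonempty} := by
      ext x
      simp only [Set.mem_preimage, Set.mem_Iio, Metric.infEDist_lt_iff, Set.mem_setOf_eq]
      constructor
      · rintro ⟨y, hy, hd⟩; exact ⟨y, hy, by show edist y a < r; rwa [edist_comm]⟩
      · rintro ⟨y, hy, hd⟩; exact ⟨y, hy, by rwa [show (y ∈ EMetric.ball a r) = (edist y a < r) from rfl, edist_comm] at hd⟩
    rw [this]
    exact hmeas _ EMetric.isOpen_ball
  set u : ℕ → A := TopologicalSpace.denseSeq A with hu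
  have hud : DenseRange u := TopologicalSpace.denseRange_denseSeq A
  have key : ∀ p : X × A, Metric.infEDist p.2 (Fa p.1)
      = ⨅ k, (Metric.infEDist (u k) (Fa p.1) + edist p.2 (u k)) := by
    intro p
    apply le_antisymm
    · exact le_iInf fun k => Metric.infEDist_le_infEDist_add_edist
    · by_cases hne : (Fa p.1).Nonempty
      · refine ENNReal.le_of_forall_pos_le_add fun ε hε _ => ?_
        obtain ⟨k, hk⟩ := hud.exists_dist_lt p.2 (half_pos (by exact_mod_cast hε) : (0:ℝ) < ε / 2)
        have hk' : edist p.2 (u k) < ENNReal.ofReal ((ε : ℝ) / 2) := by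
          rw [edist_dist]; exact ENNReal.ofReal_lt_ofReal_iff_of_nonneg dist_nonneg |>.2 hk
        calc ⨅ k, (Metric.infEDist (u k) (Fa p.1) + edist p.2 (u k))
            ≤ Metric.infEDist (u k) (Fa p.1) + edist p.2 (u k) := iInf_le _ k
          _ ≤ (Metric.infEDist p.2 (Fa p.1) + edist (u k) p.2) + edist p.2 (u k) :=
              add_le_add_left Metric.infEDist_le_infEDist_add_edist _
          _ = Metric.infEDist p.2 (Fa p.1) + (edist p.2 (u k) + edist p.2 (u k)) := by
              rw [edist_comm (u k) p.2]; ring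
          _ ≤ Metric.infEDist p.2 (Fa p.1) + (ENNReal.ofReal ((ε:ℝ)/2) + ENNReal.ofReal ((ε:ℝ)/2)) := by
              gcongr
          _ = Metric.infEDist p.2 (Fa p.1) + ENNReal.ofReal (ε:ℝ) := by
              rw [← ENNReal.ofReal_add (by positivity) (by positivity), add_halves]
          _ = Metric.infEDist p.2 (Fa p.1) + ε := by rw [ENNReal.ofReal_coe_nnreal]
      · rw [Set.not_nonempty_iff_eq_empty] at hne
        rw [hne, Metric.infEDist_empty]
        exact le_top
  have hF : Measurable fun p : X × A => Metric.infEDist p.2 (Fa p.1) := by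
    simp_rw [key]
    exact Measurable.iInf fun k =>
      ((h1 (u k)).comp measurable_fst).add
        (((continuous_id.edist continuous_const).measurable).comp measurable_snd)
  have : {p : X × A | p.2 ∈ Fa p.1} = (fun p : X × A => Metric.infEDist p.2 (Fa p.1)) ⁻¹' {0} := by
    ext p
    simp [Set.mem_setOf_eq, Metric.mem_iff_infEDist_zero_of_closed (hcl p.1)]
  rw [this]
  exact hF (measurableSet_singleton 0)


lemma exists_station {X A : Type*} [MeasurableSpace X] [MetricSpace A] [CompactSpace A]
    [MeasurableSpace A] [BorelSpace A] [Nonempty A] (Fa : X → Set A)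
    (hG : MeasurableSet {p : X × A | p.2 ∈ Fa p.1})
    (ρ : Measure (X × A)) [IsProbabilityMeasure ρ]
    (hgraph : ρ {p : X × A | p.2 ∈ Fa p.1} = 1)
    (κ₀ : Kernel X A) [IsMarkovKernel κ₀] (hκ₀ : ∀ x, κ₀ x (Fa x) = 1) :
    ∃ κ : Kernel X A, IsMarkovKernel κ ∧ (∀ x, κ x (Fa x) = 1) ∧ ρ.fst ⊗ₘ κ = ρ := by
  set κ' := ρ.condKernel with hκ'
  have hd : ρ.fst ⊗ₘ κ' = ρ := ρ.disintegrate _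
  have hpre : ∀ x : X, Prod.mk x ⁻¹' {p : X × A | p.2 ∈ Fa p.1} = Fa x := fun x => rfl
  have hfmeas : Measurable fun x => κ' x (Fa x) := by
    simpa [hpre] using Kernel.measurable_kernel_prodMk_left (κ := κ') hG
  have h1 : ∫⁻ x, κ' x (Fa x) ∂ρ.fst = 1 := by
    have := Measure.compProd_apply (μ := ρ.fst) (κ := κ') hG
    rw [hd, hgraph] at this
    simpa [hpre] using this.symm
  have hle : ∀ x, κ' x (Fa x) ≤ 1 := fun x => prob_le_one
  have hae : ∀ᵐ x ∂ρ.fst, κ' x (Fa x) = 1 := by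
    have hsub : ∫⁻ x, (1 - κ' x (Fa x)) ∂ρ.fst = 0 := by
      rw [lintegral_sub hfmeas (by rw [h1]; exact ENNReal.one_ne_top)
        (Filter.Eventually.of_forall hle), h1]
      simp
    have := (lintegral_eq_zero_iff (Measurable.const_sub hfmeas 1)).1 hsub
    filter_upwards [this] with x hx
    exact le_antisymm (hle x) (tsub_eq_zero_iff_le.1 hx)
  set N := {x | κ' x (Fa x) ≠ 1} with hN
  have hNmeas : MeasurableSet N := (hfmeas (measurableSet_singleton 1)).compl
  have hNnull : ρ.fst N = 0 := by
    rw [hN, ← MeasureTheory.ae_iff]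
    exact hae
  refine ⟨Kernel.piecewise hNmeas κ₀ κ', inferInstance, ?_, ?_⟩
  · intro x
    rw [Kernel.piecewise_apply]
    split_ifs with h
    · exact hκ₀ x
    · simpa [hN, Set.mem_setOf_eq, not_not] using h
  · conv_rhs => rw [← hd]
    apply Measure.compProd_congr
    filter_upwards [measure_eq_zero_iff_ae_notMem.1 hNnull] with x hx
    rw [Kernel.piecewise_apply, if_neg hx]

end Selection

lemma cE_eq' (β : ℝ≥0) (t : ℕ) :
    (((1 - β) * β ^ t : ℝ≥0) : ℝ≥0∞) = ((1 - β : ℝ≥0) : ℝ≥0∞) * (β : ℝ≥0∞) ^ t := by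
  push_cast; ring

section Dyn
variable {X A₁ A₂ : Type u} [MeasurableSpace X] [MeasurableSpace A₁] [MeasurableSpace A₂]
variable (η : Measure X) [IsProbabilityMeasure η]
variable (Q : Kernel (X × A₁ × A₂) X) [IsMarkovKernel Q]
variable (π₁ : ∀ t, Kernel (Hist X A₁ A₂ t) A₁) (π₂ : ∀ t, Kernel (Hist X A₁ A₂ t) A₂)

/-- The step kernel from `H_t` to `(A₁ × A₂) × X`. -/
noncomputable def stepK (t : ℕ) : Kernel (Hist X A₁ A₂ t) ((A₁ × A₂) × X) :=
  (π₁ t ×ₖ π₂ t) ⊗ₖ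
    (Q.comap (fun p : Hist X A₁ A₂ t × (A₁ × A₂) => (curState t p.1, p.2))
      (((measurable_curState t).comp measurable_fst).prodMk measurable_snd))

lemma traj_succ (t : ℕ) :
    traj η Q π₁ π₂ (t + 1) = (traj η Q π₁ π₂ t) ⊗ₘ stepK Q π₁ π₂ t := rfl

variable (hm₁ : ∀ t, IsMarkovKernel (π₁ t)) (hm₂ : ∀ t, IsMarkovKernel (π₂ t))

include hm₁ hm₂ in
lemma stepK_markov (t : ℕ) : IsMarkovKernel (stepK Q π₁ π₂ t) := by
  haveI := hm₁ t; haveI := hm₂ t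
  rw [stepK]; infer_instance

include hm₁ hm₂ in
lemma traj_prob : ∀ t, IsProbabilityMeasure (traj η Q π₁ π₂ t)
  | 0 => by rw [show traj η Q π₁ π₂ 0 = η from rfl]; exact (inferInstance : IsProbabilityMeasure η)
  | t + 1 => by
      haveI := traj_prob t
      haveI := stepK_markov Q π₁ π₂ hm₁ hm₂ t
      exact inferInstanceAs
        (IsProbabilityMeasure ((traj η Q π₁ π₂ t) ⊗ₘ stepK Q π₁ π₂ t))

include hm₁ hm₂ in
lemma lintegral_traj_succ (t : ℕ) {f : Hist X A₁ A₂ t × (A₁ × A₂) × X → ℝ≥0∞}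
    (hf : Measurable f) :
    ∫⁻ h, f h ∂(traj η Q π₁ π₂ (t + 1) : Measure (Hist X A₁ A₂ t × (A₁ × A₂) × X))
      = ∫⁻ h, ∫⁻ q, f (h, q) ∂(stepK Q π₁ π₂ t h) ∂(traj η Q π₁ π₂ t) := by
  haveI := traj_prob η Q π₁ π₂ hm₁ hm₂ t
  haveI := stepK_markov Q π₁ π₂ hm₁ hm₂ t
  exact Measure.lintegral_compProd hf

include hm₁ hm₂ in
lemma stepLaw_lintegral (t : ℕ) {g : X × A₁ × A₂ → ℝ≥0∞} (hg : Measurable g) :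
    ∫⁻ p, g p ∂(stepLaw η Q π₁ π₂ t)
      = ∫⁻ h, ∫⁻ a, g (curState t h, a) ∂((π₁ t ×ₖ π₂ t) h) ∂(traj η Q π₁ π₂ t) := by
  haveI := hm₁ t; haveI := hm₂ t
  haveI := traj_prob η Q π₁ π₂ hm₁ hm₂ t
  haveI := stepK_markov Q π₁ π₂ hm₁ hm₂ t
  have hf : Measurable fun h : Hist X A₁ A₂ t × (A₁ × A₂) × X => (curState t h.1, h.2.1) :=
    ((measurable_curState t).comp measurable_fst).prodMk (measurable_fst.comp measurable_snd)
  rw [stepLaw]; erw [lintegral_map hg hf]; rw [traj_succ,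
    Measure.lintegral_compProd (f := fun h : Hist X A₁ A₂ t × (A₁ × A₂) × X =>
      g (curState t h.1, h.2.1)) (hg.comp hf)]
  refine lintegral_congr fun h => ?_
  have hcomap : IsMarkovKernel
      (Q.comap (fun p : Hist X A₁ A₂ t × (A₁ × A₂) => (curState t p.1, p.2))
        (((measurable_curState t).comp measurable_fst).prodMk measurable_snd)) := by
    infer_instance
  have hinner := Kernel.lintegral_compProd (π₁ t ×ₖ π₂ t)
    (Q.comap (fun p : Hist X A₁ A₂ t × (A₁ × A₂) => (curState t p.1, p.2))
      (((measurable_curState t).comp measurable_fst).prodMk measurable_snd)) h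
    (f := fun q : (A₁ × A₂) × X => g (curState t h, q.1))
    (hg.comp (measurable_const.prodMk measurable_fst))
  refine Eq.trans hinner ?_
  refine lintegral_congr fun a => ?_
  simp [measure_univ]

include hm₁ hm₂ in
lemma stepLaw_prob (t : ℕ) : IsProbabilityMeasure (stepLaw η Q π₁ π₂ t) := by
  haveI : @IsProbabilityMeasure (Hist X A₁ A₂ t × (A₁ × A₂) × X) _
      (traj η Q π₁ π₂ (t + 1)) := traj_prob η Q π₁ π₂ hm₁ hm₂ (t + 1)
  exact Measure.isProbabilityMeasure_map
    (((measurable_curState t).comp measurable_fst).prodMk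
      (measurable_fst.comp measurable_snd)).aemeasurable

omit [IsProbabilityMeasure η] [IsMarkovKernel Q] in
lemma occHD_apply (β : ℝ≥0) {s : Set (X × A₁ × A₂)} (hs : MeasurableSet s) :
    occHD β η Q π₁ π₂ s = ∑' t, (((1 - β) * β ^ t : ℝ≥0) : ℝ≥0∞) * stepLaw η Q π₁ π₂ t s := by
  rw [occHD, Measure.sum_apply _ hs]
  refine tsum_congr fun t => ?_
  rw [ENNReal.smul_def, Measure.smul_apply, smul_eq_mul]

omit [IsProbabilityMeasure η] [IsMarkovKernel Q] in
lemma lintegral_occHD (β : ℝ≥0) {g : X × A₁ × A₂ → ℝ≥0∞} :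
    ∫⁻ p, g p ∂(occHD β η Q π₁ π₂)
      = ∑' t, (((1 - β) * β ^ t : ℝ≥0) : ℝ≥0∞) * ∫⁻ p, g p ∂(stepLaw η Q π₁ π₂ t) := by
  rw [occHD, lintegral_sum_measure]
  refine tsum_congr fun t => ?_
  rw [ENNReal.smul_def, lintegral_smul_measure, smul_eq_mul]

lemma tsum_coef {β : ℝ≥0} (hβ1 : β < 1) :
    ∑' t : ℕ, (((1 - β) * β ^ t : ℝ≥0) : ℝ≥0∞) = 1 := by
  have h1 : ∀ t : ℕ, (((1 - β) * β ^ t : ℝ≥0) : ℝ≥0∞)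
      = ((1 - β : ℝ≥0) : ℝ≥0∞) * ((β : ℝ≥0∞)) ^ t := by
    intro t; push_cast; ring
  simp_rw [h1]
  rw [ENNReal.tsum_mul_left, ENNReal.tsum_geometric]
  have hcoe : (1 : ℝ≥0∞) - (β : ℝ≥0∞) = ((1 - β : ℝ≥0) : ℝ≥0∞) := by
    rw [← ENNReal.coe_one, ← ENNReal.coe_sub]
  rw [hcoe, ← ENNReal.coe_inv, ← ENNReal.coe_mul,
    mul_inv_cancel₀, ENNReal.coe_one]
  · exact fun h => by simp [tsub_eq_zero_iff_le] at h; exact absurd h (not_le.2 hβ1)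
  · exact fun h => by simp [tsub_eq_zero_iff_le] at h; exact absurd h (not_le.2 hβ1)

include hm₁ hm₂ in
lemma occHD_prob (β : ℝ≥0) (hβ1 : β < 1) : IsProbabilityMeasure (occHD β η Q π₁ π₂) := by
  constructor
  rw [occHD_apply η Q π₁ π₂ β MeasurableSet.univ]
  have : ∀ t, stepLaw η Q π₁ π₂ t Set.univ = 1 := fun t =>
    (stepLaw_prob η Q π₁ π₂ hm₁ hm₂ t).measure_univ
  simp_rw [this, mul_one]
  exact tsum_coef hβ1

include hm₁ hm₂ in
lemma stepLaw_marg₁ (t : ℕ) {s : Set (X × A₁)} (hs : MeasurableSet s) :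
    stepLaw η Q π₁ π₂ t ((fun p : X × A₁ × A₂ => (p.1, p.2.1)) ⁻¹' s)
      = ∫⁻ h, (π₁ t) h (Prod.mk (curState t h) ⁻¹' s) ∂(traj η Q π₁ π₂ t) := by
  haveI := hm₁ t; haveI := hm₂ t
  have hpre : MeasurableSet ((fun p : X × A₁ × A₂ => (p.1, p.2.1)) ⁻¹' s) :=
    (measurable_fst.prodMk (measurable_fst.comp measurable_snd)) hs
  rw [← lintegral_indicator_one hpre,
    stepLaw_lintegral η Q π₁ π₂ hm₁ hm₂ t
      (g := ((fun p : X × A₁ × A₂ => (p.1, p.2.1)) ⁻¹' s).indicator 1)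
      ((measurable_one (α := ℝ≥0∞)).indicator hpre)]
  refine lintegral_congr fun h => ?_
  have hset : ∀ a : A₁ × A₂,
      ((fun p : X × A₁ × A₂ => (p.1, p.2.1)) ⁻¹' s).indicator
          (1 : X × A₁ × A₂ → ℝ≥0∞) (curState t h, a)
        = (((Prod.mk (curState t h) ⁻¹' s) ×ˢ (Set.univ : Set A₂)).indicator
            (1 : A₁ × A₂ → ℝ≥0∞)) a := by
    intro a
    by_cases hmem : (curState t h, a.1) ∈ s
    · rw [Set.indicator_of_mem (by exact hmem), Set.indicator_of_mem (by simp [hmem])]; rfl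
    · rw [Set.indicator_of_notMem (by exact hmem), Set.indicator_of_notMem (by simp [hmem])]
  rw [lintegral_congr hset,
    lintegral_indicator_one ((measurable_prodMk_left hs).prod MeasurableSet.univ),
    Kernel.prod_apply, Measure.prod_prod, measure_univ, mul_one]

include hm₁ hm₂ in
lemma stepLaw_marg₂ (t : ℕ) {s : Set (X × A₂)} (hs : MeasurableSet s) :
    stepLaw η Q π₁ π₂ t ((fun p : X × A₁ × A₂ => (p.1, p.2.2)) ⁻¹' s)
      = ∫⁻ h, (π₂ t) h ((fun b => (curState t h, b)) ⁻¹' s) ∂(traj η Q π₁ π₂ t) := by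
  haveI := hm₁ t; haveI := hm₂ t
  have hpre : MeasurableSet ((fun p : X × A₁ × A₂ => (p.1, p.2.2)) ⁻¹' s) :=
    (measurable_fst.prodMk (measurable_snd.comp measurable_snd)) hs
  rw [← lintegral_indicator_one hpre,
    stepLaw_lintegral η Q π₁ π₂ hm₁ hm₂ t
      (g := ((fun p : X × A₁ × A₂ => (p.1, p.2.2)) ⁻¹' s).indicator 1)
      ((measurable_one (α := ℝ≥0∞)).indicator hpre)]
  refine lintegral_congr fun h => ?_
  have hset : ∀ a : A₁ × A₂,
      ((fun p : X × A₁ × A₂ => (p.1, p.2.2)) ⁻¹' s).indicator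
          (1 : X × A₁ × A₂ → ℝ≥0∞) (curState t h, a)
        = (((Set.univ : Set A₁) ×ˢ ((fun b => (curState t h, b)) ⁻¹' s)).indicator
            (1 : A₁ × A₂ → ℝ≥0∞)) a := by
    intro a
    by_cases hmem : (curState t h, a.2) ∈ s
    · rw [Set.indicator_of_mem (by exact hmem), Set.indicator_of_mem (by simp [hmem])]; rfl
    · rw [Set.indicator_of_notMem (by exact hmem), Set.indicator_of_notMem (by simp [hmem])]
  rw [lintegral_congr hset,
    lintegral_indicator_one (MeasurableSet.univ.prod (measurable_prodMk_left hs)),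
    Kernel.prod_apply, Measure.prod_prod, measure_univ, one_mul]

include hm₁ hm₂ in
lemma stepLaw_fst (t : ℕ) {D : Set X} (hD : MeasurableSet D) :
    stepLaw η Q π₁ π₂ t (Prod.fst ⁻¹' D) = (traj η Q π₁ π₂ t).map (curState t) D := by
  haveI := hm₁ t; haveI := hm₂ t
  have hpre : MeasurableSet (Prod.fst ⁻¹' D : Set (X × A₁ × A₂)) := measurable_fst hD
  rw [← lintegral_indicator_one hpre,
    stepLaw_lintegral η Q π₁ π₂ hm₁ hm₂ t
      (g := (Prod.fst ⁻¹' D : Set (X × A₁ × A₂)).indicator 1)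
      ((measurable_one (α := ℝ≥0∞)).indicator hpre),
    Measure.map_apply (measurable_curState t) hD, ← lintegral_indicator_one
      ((measurable_curState t) hD)]
  refine lintegral_congr fun h => ?_
  have hset : ∀ a : A₁ × A₂,
      (Prod.fst ⁻¹' D : Set (X × A₁ × A₂)).indicator (1 : X × A₁ × A₂ → ℝ≥0∞) (curState t h, a)
        = (curState t ⁻¹' D).indicator (1 : Hist X A₁ A₂ t → ℝ≥0∞) h := by
    intro a
    by_cases hmem : curState t h ∈ D
    · rw [Set.indicator_of_mem (by exact hmem), Set.indicator_of_mem (by exact hmem)]; rfl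
    · rw [Set.indicator_of_notMem (by exact hmem), Set.indicator_of_notMem (by exact hmem)]
  rw [lintegral_congr hset, lintegral_const, measure_univ, mul_one]

include hm₁ hm₂ in
lemma traj_succ_apply (t : ℕ) {s : Set (Hist X A₁ A₂ t × (A₁ × A₂) × X)}
    (hs : MeasurableSet s) :
    traj η Q π₁ π₂ (t + 1) s
      = ∫⁻ h, stepK Q π₁ π₂ t h (Prod.mk h ⁻¹' s) ∂(traj η Q π₁ π₂ t) := by
  haveI := traj_prob η Q π₁ π₂ hm₁ hm₂ t
  haveI := stepK_markov Q π₁ π₂ hm₁ hm₂ t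
  exact Measure.compProd_apply hs

include hm₁ hm₂ in
lemma xlaw_succ (t : ℕ) {D : Set X} (hD : MeasurableSet D) :
    (traj η Q π₁ π₂ (t + 1)).map (curState (t + 1)) D
      = ∫⁻ p, Q p D ∂(stepLaw η Q π₁ π₂ t) := by
  haveI := hm₁ t; haveI := hm₂ t
  haveI := traj_prob η Q π₁ π₂ hm₁ hm₂ t
  have hsmeas : MeasurableSet {h : Hist X A₁ A₂ t × (A₁ × A₂) × X | h.2.2 ∈ D} :=
    (measurable_snd.comp measurable_snd) hD
  rw [Measure.map_apply (measurable_curState (t + 1)) hD,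
    stepLaw_lintegral η Q π₁ π₂ hm₁ hm₂ t (Kernel.measurable_coe Q hD)]
  refine Eq.trans (traj_succ_apply η Q π₁ π₂ hm₁ hm₂ t hsmeas) ?_
  refine lintegral_congr fun h => ?_
  rw [stepK]
  refine Eq.trans (Kernel.compProd_apply (measurable_prodMk_left hsmeas) _ _ h) ?_
  refine lintegral_congr fun a => ?_
  rw [Kernel.comap_apply]
  congr 1

include hm₁ hm₂ in
lemma muX_flow (β : ℝ≥0) {D : Set X} (hD : MeasurableSet D) :
    (occHD β η Q π₁ π₂).map Prod.fst D
      = ((1 - β : ℝ≥0) : ℝ≥0∞) * η D + (β : ℝ≥0∞) * ∫⁻ p, Q p D ∂(occHD β η Q π₁ π₂) := by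
  rw [Measure.map_apply measurable_fst hD, occHD_apply η Q π₁ π₂ β (measurable_fst hD)]
  have hterm : ∀ t, stepLaw η Q π₁ π₂ t (Prod.fst ⁻¹' D)
      = (traj η Q π₁ π₂ t).map (curState t) D := fun t =>
    stepLaw_fst η Q π₁ π₂ hm₁ hm₂ t hD
  simp_rw [hterm]
  rw [tsum_eq_zero_add' ENNReal.summable]
  congr 1
  · have h0 : (traj η Q π₁ π₂ 0).map (curState 0) = η := by
      rw [show curState (X := X) (A₁ := A₁) (A₂ := A₂) 0 = id from rfl]
      exact Measure.map_id
    rw [h0, pow_zero, mul_one]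
  · have hsucc : ∀ t, ((traj η Q π₁ π₂ (t + 1)).map (curState (t + 1))) D
        = ∫⁻ p, Q p D ∂(stepLaw η Q π₁ π₂ t) := fun t =>
      xlaw_succ η Q π₁ π₂ hm₁ hm₂ t hD
    simp_rw [hsucc]
    rw [lintegral_occHD η Q π₁ π₂ β, ← ENNReal.tsum_mul_left]
    refine tsum_congr fun t => ?_
    rw [cE_eq' β (t + 1), cE_eq' β t]
    ring

include hm₁ hm₂ in
lemma marg_stationary₁ (β : ℝ≥0) (hβ1 : β < 1) (σ₁ : Kernel X A₁) [IsMarkovKernel σ₁]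
    (hst : ∀ t, π₁ t = σ₁.comap (curState t) (measurable_curState t)) :
    ((occHD β η Q π₁ π₂).map Prod.fst) ⊗ₘ σ₁
      = (occHD β η Q π₁ π₂).map (fun p : X × A₁ × A₂ => (p.1, p.2.1)) := by
  haveI := occHD_prob η Q π₁ π₂ hm₁ hm₂ β hβ1
  haveI : IsProbabilityMeasure ((occHD β η Q π₁ π₂).map Prod.fst) :=
    Measure.isProbabilityMeasure_map measurable_fst.aemeasurable
  have hm : Measurable fun p : X × A₁ × A₂ => (p.1, p.2.1) :=
    measurable_fst.prodMk (measurable_fst.comp measurable_snd)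
  ext s hs
  rw [Measure.compProd_apply hs, Measure.map_apply hm hs,
    occHD_apply η Q π₁ π₂ β (hm hs),
    lintegral_map (Kernel.measurable_kernel_prodMk_left hs) measurable_fst,
    lintegral_occHD η Q π₁ π₂ β]
  refine tsum_congr fun t => ?_
  congr 1
  rw [stepLaw_marg₁ η Q π₁ π₂ hm₁ hm₂ t hs,
    stepLaw_lintegral η Q π₁ π₂ hm₁ hm₂ t
      (g := fun p : X × A₁ × A₂ => σ₁ p.1 (Prod.mk p.1 ⁻¹' s))
      ((Kernel.measurable_kernel_prodMk_left hs).comp measurable_fst)]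
  haveI := hm₂ t
  refine lintegral_congr fun h => ?_
  have hconst : (fun a : A₁ × A₂ => σ₁ (curState t h, a).1 (Prod.mk (curState t h, a).1 ⁻¹' s))
      = fun _ : A₁ × A₂ => σ₁ (curState t h) (Prod.mk (curState t h) ⁻¹' s) := rfl
  rw [hconst, lintegral_const, measure_univ, mul_one, hst t, Kernel.comap_apply]

include hm₁ hm₂ in
lemma marg_stationary₂ (β : ℝ≥0) (hβ1 : β < 1) (σ₂ : Kernel X A₂) [IsMarkovKernel σ₂]
    (hst : ∀ t, π₂ t = σ₂.comap (curState t) (measurable_curState t)) :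
    ((occHD β η Q π₁ π₂).map Prod.fst) ⊗ₘ σ₂
      = (occHD β η Q π₁ π₂).map (fun p : X × A₁ × A₂ => (p.1, p.2.2)) := by
  haveI := occHD_prob η Q π₁ π₂ hm₁ hm₂ β hβ1
  haveI : IsProbabilityMeasure ((occHD β η Q π₁ π₂).map Prod.fst) :=
    Measure.isProbabilityMeasure_map measurable_fst.aemeasurable
  have hm : Measurable fun p : X × A₁ × A₂ => (p.1, p.2.2) :=
    measurable_fst.prodMk (measurable_snd.comp measurable_snd)
  ext s hs
  rw [Measure.compProd_apply hs, Measure.map_apply hm hs,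
    occHD_apply η Q π₁ π₂ β (hm hs),
    lintegral_map (Kernel.measurable_kernel_prodMk_left hs) measurable_fst,
    lintegral_occHD η Q π₁ π₂ β]
  refine tsum_congr fun t => ?_
  congr 1
  rw [stepLaw_marg₂ η Q π₁ π₂ hm₁ hm₂ t hs,
    stepLaw_lintegral η Q π₁ π₂ hm₁ hm₂ t
      (g := fun p : X × A₁ × A₂ => σ₂ p.1 (Prod.mk p.1 ⁻¹' s))
      ((Kernel.measurable_kernel_prodMk_left hs).comp measurable_fst)]
  haveI := hm₁ t
  refine lintegral_congr fun h => ?_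
  have hconst : (fun a : A₁ × A₂ => σ₂ (curState t h, a).1 (Prod.mk (curState t h, a).1 ⁻¹' s))
      = fun _ : A₁ × A₂ => σ₂ (curState t h) (Prod.mk (curState t h) ⁻¹' s) := rfl
  rw [hconst, lintegral_const, measure_univ, mul_one, hst t, Kernel.comap_apply]

include hm₁ hm₂ in
lemma occHD_graph₁ (β : ℝ≥0) (hβ1 : β < 1) (Fa₁ : X → Set A₁) {G : Set (X × A₁)}
    (hG : MeasurableSet G) (hGeq : ∀ x : X, Prod.mk x ⁻¹' G = Fa₁ x)
    (hfeas₁ : ∀ t h, π₁ t h (Fa₁ (curState t h)) = 1) :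
    (occHD β η Q π₁ π₂).map (fun p : X × A₁ × A₂ => (p.1, p.2.1)) G = 1 := by
  have hm : Measurable fun p : X × A₁ × A₂ => (p.1, p.2.1) :=
    measurable_fst.prodMk (measurable_fst.comp measurable_snd)
  rw [Measure.map_apply hm hG, occHD_apply η Q π₁ π₂ β (hm hG)]
  have hone : ∀ t, stepLaw η Q π₁ π₂ t ((fun p : X × A₁ × A₂ => (p.1, p.2.1)) ⁻¹' G) = 1 := by
    intro t
    rw [stepLaw_marg₁ η Q π₁ π₂ hm₁ hm₂ t hG]
    have heq : ∀ h, (π₁ t) h (Prod.mk (curState t h) ⁻¹' G) = 1 := by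
      intro h; rw [hGeq]; exact hfeas₁ t h
    haveI := traj_prob η Q π₁ π₂ hm₁ hm₂ t
    simp_rw [heq]
    rw [lintegral_one, measure_univ]
  simp_rw [hone, mul_one]
  exact tsum_coef hβ1

include hm₁ hm₂ in
lemma occHD_graph₂ (β : ℝ≥0) (hβ1 : β < 1) (Fa₂ : X → Set A₂) {G : Set (X × A₂)}
    (hG : MeasurableSet G) (hGeq : ∀ x : X, (fun b => (x, b)) ⁻¹' G = Fa₂ x)
    (hfeas₂ : ∀ t h, π₂ t h (Fa₂ (curState t h)) = 1) :
    (occHD β η Q π₁ π₂).map (fun p : X × A₁ × A₂ => (p.1, p.2.2)) G = 1 := by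
  have hm : Measurable fun p : X × A₁ × A₂ => (p.1, p.2.2) :=
    measurable_fst.prodMk (measurable_snd.comp measurable_snd)
  rw [Measure.map_apply hm hG, occHD_apply η Q π₁ π₂ β (hm hG)]
  have hone : ∀ t, stepLaw η Q π₁ π₂ t ((fun p : X × A₁ × A₂ => (p.1, p.2.2)) ⁻¹' G) = 1 := by
    intro t
    rw [stepLaw_marg₂ η Q π₁ π₂ hm₁ hm₂ t hG]
    have heq : ∀ h, (π₂ t) h ((fun b => (curState t h, b)) ⁻¹' G) = 1 := by
      intro h; rw [hGeq]; exact hfeas₂ t h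
    haveI := traj_prob η Q π₁ π₂ hm₁ hm₂ t
    simp_rw [heq]
    rw [lintegral_one, measure_univ]
  simp_rw [hone, mul_one]
  exact tsum_coef hβ1

end Dyn

section Gstep
variable {X A₁ A₂ : Type u} [MeasurableSpace X] [MeasurableSpace A₁] [MeasurableSpace A₂]
variable (Q : Kernel (X × A₁ × A₂) X) [IsMarkovKernel Q]
variable (κ₁ : Kernel X A₁) (κ₂ : Kernel X A₂) [IsMarkovKernel κ₁] [IsMarkovKernel κ₂]

lemma gstep_inner_meas : Measurable fun x : X => ((κ₁ ×ₖ κ₂) x).bind fun a => Q (x, a) := by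
  apply Measure.measurable_of_measurable_coe
  intro s hs
  have heval : ∀ x : X, (((κ₁ ×ₖ κ₂) x).bind fun a => Q (x, a)) s
      = ∫⁻ a, Q (x, a) s ∂((κ₁ ×ₖ κ₂) x) := fun x =>
    Measure.bind_apply hs (Q.measurable.comp measurable_prodMk_left :
      Measurable fun a => Q (x, a)).aemeasurable
  simp_rw [heval]
  exact Measurable.lintegral_kernel_prod_right' (Kernel.measurable_coe Q hs)

lemma gstep_apply (γ : Measure X) {D : Set X} (hD : MeasurableSet D) :
    gstep Q κ₁ κ₂ γ D = ∫⁻ x, ∫⁻ a, Q (x, a) D ∂((κ₁ ×ₖ κ₂) x) ∂γ := by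
  rw [gstep, Measure.bind_apply hD (gstep_inner_meas Q κ₁ κ₂).aemeasurable]
  refine lintegral_congr fun x => ?_
  exact Measure.bind_apply hD (Q.measurable.comp measurable_prodMk_left :
    Measurable fun a => Q (x, a)).aemeasurable

lemma gstep_univ (γ : Measure X) : gstep Q κ₁ κ₂ γ Set.univ = γ Set.univ := by
  rw [gstep_apply Q κ₁ κ₂ γ MeasurableSet.univ]
  have : ∀ x : X, ∫⁻ a, Q (x, a) Set.univ ∂((κ₁ ×ₖ κ₂) x) = 1 := by
    intro x; simp [measure_univ]
  simp_rw [this, lintegral_one]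

lemma gstep_smul (c : ℝ≥0∞) (γ : Measure X) :
    gstep Q κ₁ κ₂ (c • γ) = c • gstep Q κ₁ κ₂ γ := by
  ext D hD
  rw [Measure.smul_apply, smul_eq_mul, gstep_apply Q κ₁ κ₂ _ hD, gstep_apply Q κ₁ κ₂ _ hD,
    lintegral_smul_measure, smul_eq_mul]

lemma gstep_add (γ₁ γ₂ : Measure X) :
    gstep Q κ₁ κ₂ (γ₁ + γ₂) = gstep Q κ₁ κ₂ γ₁ + gstep Q κ₁ κ₂ γ₂ := by
  ext D hD
  rw [Measure.add_apply, gstep_apply Q κ₁ κ₂ _ hD, gstep_apply Q κ₁ κ₂ _ hD,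
    gstep_apply Q κ₁ κ₂ _ hD, lintegral_add_measure]

lemma gstep_eq_compProd (γ : Measure X) [SFinite γ] {D : Set X} (hD : MeasurableSet D) :
    gstep Q κ₁ κ₂ γ D = ∫⁻ p, Q p D ∂(γ ⊗ₘ (κ₁ ×ₖ κ₂)) := by
  rw [gstep_apply Q κ₁ κ₂ γ hD, Measure.lintegral_compProd (Kernel.measurable_coe Q hD)]

lemma map_compProd_prodKernel_fst (γ : Measure X) [SFinite γ] :
    (γ ⊗ₘ (κ₁ ×ₖ κ₂)).map (fun p : X × A₁ × A₂ => (p.1, p.2.1)) = γ ⊗ₘ κ₁ := by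
  ext s hs
  have hm : Measurable fun p : X × A₁ × A₂ => (p.1, p.2.1) :=
    measurable_fst.prodMk (measurable_fst.comp measurable_snd)
  rw [Measure.map_apply hm hs, Measure.compProd_apply (hm hs), Measure.compProd_apply hs]
  refine lintegral_congr fun x => ?_
  have : (Prod.mk x ⁻¹' ((fun p : X × A₁ × A₂ => (p.1, p.2.1)) ⁻¹' s))
      = (Prod.mk x ⁻¹' s) ×ˢ (Set.univ : Set A₂) := by
    ext a; simp
  rw [this, Kernel.prod_apply, Measure.prod_prod, measure_univ, mul_one]

lemma map_compProd_prodKernel_snd (γ : Measure X) [SFinite γ] :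
    (γ ⊗ₘ (κ₁ ×ₖ κ₂)).map (fun p : X × A₁ × A₂ => (p.1, p.2.2)) = γ ⊗ₘ κ₂ := by
  ext s hs
  have hm : Measurable fun p : X × A₁ × A₂ => (p.1, p.2.2) :=
    measurable_fst.prodMk (measurable_snd.comp measurable_snd)
  rw [Measure.map_apply hm hs, Measure.compProd_apply (hm hs), Measure.compProd_apply hs]
  refine lintegral_congr fun x => ?_
  have : (Prod.mk x ⁻¹' ((fun p : X × A₁ × A₂ => (p.1, p.2.2)) ⁻¹' s))
      = (Set.univ : Set A₁) ×ˢ (Prod.mk x ⁻¹' s) := by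
    ext a; simp
  rw [this, Kernel.prod_apply, Measure.prod_prod, measure_univ, one_mul]

lemma cE_eq (β : ℝ≥0) (t : ℕ) :
    (((1 - β) * β ^ t : ℝ≥0) : ℝ≥0∞) = ((1 - β : ℝ≥0) : ℝ≥0∞) * (β : ℝ≥0∞) ^ t := by
  push_cast; ring

lemma occX_apply (β : ℝ≥0) (η : Measure X) {D : Set X} (hD : MeasurableSet D) :
    occX β Q κ₁ κ₂ η D
      = ∑' t, (((1 - β) * β ^ t : ℝ≥0) : ℝ≥0∞) * ((gstep Q κ₁ κ₂)^[t] η) D := by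
  rw [occX, Measure.sum_apply _ hD]
  refine tsum_congr fun t => ?_
  rw [ENNReal.smul_def, Measure.smul_apply, smul_eq_mul]

lemma occ_repr (β : ℝ≥0) (hβ1 : β < 1) (η ν : Measure X) [IsProbabilityMeasure ν]
    (hν : ν = ((1 - β : ℝ≥0) : ℝ≥0∞) • η + (β : ℝ≥0∞) • gstep Q κ₁ κ₂ ν) :
    ν = occX β Q κ₁ κ₂ η := by
  set T := gstep Q κ₁ κ₂ with hT
  have hiter : ∀ n, T^[n] ν
      = ((1 - β : ℝ≥0) : ℝ≥0∞) • T^[n] η + (β : ℝ≥0∞) • T^[n+1] ν := by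
    intro n
    induction n with
    | zero => simpa using hν
    | succ n ih =>
      rw [Function.iterate_succ_apply' T n ν, ih, hT, gstep_add, gstep_smul, gstep_smul,
        ← hT, ← Function.iterate_succ_apply' T n η, ← Function.iterate_succ_apply' T (n+1) ν]
  have hmass : ∀ n, (T^[n] ν) Set.univ = 1 := by
    intro n
    induction n with
    | zero => simp
    | succ n ih => rw [Function.iterate_succ_apply' T n ν, hT, gstep_univ, ih]
  have key : ∀ n, ∀ D : Set X, MeasurableSet D →
      ν D = (∑ t ∈ Finset.range n, (((1 - β) * β ^ t : ℝ≥0) : ℝ≥0∞) * (T^[t] η) D)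
        + (β : ℝ≥0∞) ^ n * (T^[n] ν) D := by
    intro n
    induction n with
    | zero => intro D hD; simp
    | succ n ih =>
      intro D hD
      rw [ih D hD, Finset.sum_range_succ]
      have : (T^[n] ν) D
          = ((1 - β : ℝ≥0) : ℝ≥0∞) * (T^[n] η) D + (β : ℝ≥0∞) * (T^[n+1] ν) D := by
        rw [hiter n]
        simp [Measure.add_apply, Measure.smul_apply, smul_eq_mul]
      rw [this, cE_eq]
      ring
  ext D hD
  rw [occX_apply Q κ₁ κ₂ β η hD]
  apply le_antisymm
  · have hub : ∀ n : ℕ, ν D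
        ≤ (∑' t, (((1 - β) * β ^ t : ℝ≥0) : ℝ≥0∞) * (T^[t] η) D) + (β : ℝ≥0∞) ^ n := by
      intro n
      calc ν D = (∑ t ∈ Finset.range n, (((1 - β) * β ^ t : ℝ≥0) : ℝ≥0∞) * (T^[t] η) D)
            + (β : ℝ≥0∞) ^ n * (T^[n] ν) D := key n D hD
        _ ≤ (∑' t, (((1 - β) * β ^ t : ℝ≥0) : ℝ≥0∞) * (T^[t] η) D) + (β : ℝ≥0∞) ^ n * 1 := by
            gcongr
            · exact ENNReal.sum_le_tsum _
            · rw [← hmass n]; exact measure_mono (Set.subset_univ D)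
        _ = (∑' t, (((1 - β) * β ^ t : ℝ≥0) : ℝ≥0∞) * (T^[t] η) D) + (β : ℝ≥0∞) ^ n := by
            rw [mul_one]
    have htend : Tendsto
        (fun n : ℕ => (∑' t, (((1 - β) * β ^ t : ℝ≥0) : ℝ≥0∞) * (T^[t] η) D)
          + (β : ℝ≥0∞) ^ n) atTop
        (𝓝 ((∑' t, (((1 - β) * β ^ t : ℝ≥0) : ℝ≥0∞) * (T^[t] η) D) + 0)) := by
      exact Tendsto.const_add _
        (ENNReal.tendsto_pow_atTop_nhds_zero_of_lt_one (by exact_mod_cast hβ1))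
    rw [add_zero] at htend
    exact ge_of_tendsto htend (Filter.Eventually.of_forall hub)
  · rw [ENNReal.tsum_eq_iSup_sum' (fun n => Finset.range n) ?_]
    · refine iSup_le fun n => ?_
      rw [key n D hD]
      exact le_self_add
    · intro s
      exact ⟨(s.sup id) + 1, fun i hi =>
        Finset.mem_range.2 (Nat.lt_succ_of_le (Finset.le_sup (f := id) hi))⟩

end Gstep
section ARAT
variable {X A₁ A₂ : Type u} [MeasurableSpace X] [MeasurableSpace A₁] [MeasurableSpace A₂]
variable (Q : Kernel (X × A₁ × A₂) X) [IsMarkovKernel Q]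
variable (lam : Measure X) [IsProbabilityMeasure lam]
variable (q₁ : X → X → A₁ → ℝ) (q₂ : X → X → A₂ → ℝ)

lemma phi_meas {A : Type u} [MeasurableSpace A] (q : X → X → A → ℝ)
    (hqmeas : Measurable fun r : X × X × A => q r.1 r.2.1 r.2.2) (D : Set X) :
    Measurable fun r : X × A => ∫⁻ y in D, ENNReal.ofReal (q y r.1 r.2) ∂lam := by
  have h : Measurable fun z : (X × A) × X => ENNReal.ofReal (q z.2 z.1.1 z.1.2) :=
    ENNReal.measurable_ofReal.comp (hqmeas.comp
      (measurable_snd.prodMk ((measurable_fst.comp measurable_fst).prodMk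
        (measurable_snd.comp measurable_fst))))
  exact h.lintegral_prod_right'

lemma arat_lintegral
    (hq₁meas : Measurable fun r : X × X × A₁ => q₁ r.1 r.2.1 r.2.2)
    (hq₂meas : Measurable fun r : X × X × A₂ => q₂ r.1 r.2.1 r.2.2)
    (hq₁pos : ∀ y x a, 0 ≤ q₁ y x a) (hq₂pos : ∀ y x a, 0 ≤ q₂ y x a)
    (hQdens : ∀ x a₁ a₂ D, MeasurableSet D →
      Q (x, a₁, a₂) D = ∫⁻ y in D, ENNReal.ofReal (q₁ y x a₁ + q₂ y x a₂) ∂lam)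
    (ν : Measure (X × A₁ × A₂)) {D : Set X} (hD : MeasurableSet D) :
    ∫⁻ p, Q p D ∂ν
      = (∫⁻ r, ∫⁻ y in D, ENNReal.ofReal (q₁ y r.1 r.2) ∂lam
          ∂(ν.map (fun p : X × A₁ × A₂ => (p.1, p.2.1))))
        + ∫⁻ r, ∫⁻ y in D, ENNReal.ofReal (q₂ y r.1 r.2) ∂lam
          ∂(ν.map (fun p : X × A₁ × A₂ => (p.1, p.2.2))) := by
  have hm₁ : Measurable fun p : X × A₁ × A₂ => (p.1, p.2.1) :=
    measurable_fst.prodMk (measurable_fst.comp measurable_snd)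
  have hm₂ : Measurable fun p : X × A₁ × A₂ => (p.1, p.2.2) :=
    measurable_fst.prodMk (measurable_snd.comp measurable_snd)
  have hφ := phi_meas lam (A := A₁) q₁ hq₁meas D
  have hψ := phi_meas lam (A := A₂) q₂ hq₂meas D
  have hpt : ∀ p : X × A₁ × A₂, Q p D
      = (∫⁻ y in D, ENNReal.ofReal (q₁ y p.1 p.2.1) ∂lam)
        + ∫⁻ y in D, ENNReal.ofReal (q₂ y p.1 p.2.2) ∂lam := by
    intro p
    have hq1m : Measurable fun y => ENNReal.ofReal (q₁ y p.1 p.2.1) := by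
      have hy : Measurable fun y : X => (y, p.1, p.2.1) :=
        measurable_id.prodMk measurable_const
      exact ENNReal.measurable_ofReal.comp (hq₁meas.comp hy)
    rw [show Q p D = Q (p.1, p.2.1, p.2.2) D from rfl, hQdens p.1 p.2.1 p.2.2 D hD,
      ← lintegral_add_left hq1m]
    refine lintegral_congr fun y => ?_
    exact ENNReal.ofReal_add (hq₁pos y p.1 p.2.1) (hq₂pos y p.1 p.2.2)
  calc ∫⁻ p, Q p D ∂ν
      = ∫⁻ p : X × A₁ × A₂, ((∫⁻ y in D, ENNReal.ofReal (q₁ y p.1 p.2.1) ∂lam)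
          + ∫⁻ y in D, ENNReal.ofReal (q₂ y p.1 p.2.2) ∂lam) ∂ν := lintegral_congr hpt
    _ = (∫⁻ p : X × A₁ × A₂, ∫⁻ y in D, ENNReal.ofReal (q₁ y p.1 p.2.1) ∂lam ∂ν)
        + ∫⁻ p : X × A₁ × A₂, ∫⁻ y in D, ENNReal.ofReal (q₂ y p.1 p.2.2) ∂lam ∂ν :=
        lintegral_add_left (hφ.comp hm₁) _
    _ = _ := by rw [lintegral_map hφ hm₁, lintegral_map hψ hm₂]

end ARAT

section Main
variable {X A₁ A₂ : Type u} [MeasurableSpace X] [MeasurableSpace A₁] [MeasurableSpace A₂]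

lemma main_marginals (β : ℝ≥0) (hβ1 : β < 1)
    (η : Measure X) [IsProbabilityMeasure η]
    (Q : Kernel (X × A₁ × A₂) X) [IsMarkovKernel Q]
    (lam : Measure X) [IsProbabilityMeasure lam]
    (q₁ : X → X → A₁ → ℝ) (q₂ : X → X → A₂ → ℝ)
    (hq₁meas : Measurable fun r : X × X × A₁ => q₁ r.1 r.2.1 r.2.2)
    (hq₂meas : Measurable fun r : X × X × A₂ => q₂ r.1 r.2.1 r.2.2)
    (hq₁pos : ∀ y x a, 0 ≤ q₁ y x a) (hq₂pos : ∀ y x a, 0 ≤ q₂ y x a)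
    (hQdens : ∀ x a₁ a₂ D, MeasurableSet D →
      Q (x, a₁, a₂) D = ∫⁻ y in D, ENNReal.ofReal (q₁ y x a₁ + q₂ y x a₂) ∂lam)
    (π₁ : ∀ t, Kernel (Hist X A₁ A₂ t) A₁) (π₂ : ∀ t, Kernel (Hist X A₁ A₂ t) A₂)
    (hm₁ : ∀ t, IsMarkovKernel (π₁ t)) (hm₂ : ∀ t, IsMarkovKernel (π₂ t))
    (κ₁ : Kernel X A₁) (κ₂ : Kernel X A₂) [IsMarkovKernel κ₁] [IsMarkovKernel κ₂]
    (h1 : ((occHD β η Q π₁ π₂).map Prod.fst) ⊗ₘ κ₁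
        = (occHD β η Q π₁ π₂).map (fun p : X × A₁ × A₂ => (p.1, p.2.1)))
    (h2 : ((occHD β η Q π₁ π₂).map Prod.fst) ⊗ₘ κ₂
        = (occHD β η Q π₁ π₂).map (fun p : X × A₁ × A₂ => (p.1, p.2.2))) :
    (occHD β η Q π₁ π₂).map (fun q : X × A₁ × A₂ => (q.1, q.2.1)) = occ1 β Q κ₁ κ₂ η ∧
    (occHD β η Q π₁ π₂).map (fun q : X × A₁ × A₂ => (q.1, q.2.2)) = occ2 β Q κ₁ κ₂ η := by
  haveI hμ : IsProbabilityMeasure (occHD β η Q π₁ π₂) :=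
    occHD_prob η Q π₁ π₂ hm₁ hm₂ β hβ1
  haveI : IsProbabilityMeasure ((occHD β η Q π₁ π₂).map Prod.fst) :=
    Measure.isProbabilityMeasure_map measurable_fst.aemeasurable
  have hfix : (occHD β η Q π₁ π₂).map Prod.fst
      = ((1 - β : ℝ≥0) : ℝ≥0∞) • η
        + (β : ℝ≥0∞) • gstep Q κ₁ κ₂ ((occHD β η Q π₁ π₂).map Prod.fst) := by
    ext D hD
    rw [Measure.add_apply, Measure.smul_apply, Measure.smul_apply, smul_eq_mul, smul_eq_mul,
      muX_flow η Q π₁ π₂ hm₁ hm₂ β hD]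
    congr 1
    have e1 := arat_lintegral Q lam q₁ q₂ hq₁meas hq₂meas hq₁pos hq₂pos hQdens
      (occHD β η Q π₁ π₂) hD
    have e2 := arat_lintegral Q lam q₁ q₂ hq₁meas hq₂meas hq₁pos hq₂pos hQdens
      (((occHD β η Q π₁ π₂).map Prod.fst) ⊗ₘ (κ₁ ×ₖ κ₂)) hD
    rw [map_compProd_prodKernel_fst, map_compProd_prodKernel_snd, h1, h2] at e2
    rw [gstep_eq_compProd Q κ₁ κ₂ _ hD, e2]
    exact congrArg _ e1
  have hXeq : (occHD β η Q π₁ π₂).map Prod.fst = occX β Q κ₁ κ₂ η :=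
    occ_repr Q κ₁ κ₂ β hβ1 η _ hfix
  constructor
  · rw [occ1, ← hXeq]
    exact h1.symm
  · rw [occ2, ← hXeq]
    exact h2.symm

end Main

/-- In an ARAT discounted game, for every initial distribution `η` and every
pair of history-dependent policies `(π₁, π₂)` there is a pair of stationary Markov policies
`(π₁', π₂')` whose occupation measure has the same `(X × A₁)`- and `(X × A₂)`-marginals as
`μ_{η,π₁,π₂}`; moreover, if one of the policies is already stationary Markov, it can be kept. -/
theorem stmt7 {X A₁ A₂ : Type u} [MeasurableSpace X] [MeasurableSpace.CountablyGenerated X]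
    [MetricSpace A₁] [CompactSpace A₁] [MeasurableSpace A₁] [BorelSpace A₁]
    [MetricSpace A₂] [CompactSpace A₂] [MeasurableSpace A₂] [BorelSpace A₂]
    (β : ℝ≥0) (hβ0 : 0 < β) (hβ1 : β < 1)
    (lam : Measure X) [IsProbabilityMeasure lam]
    (η : Measure X) [IsProbabilityMeasure η]
    (Q : Kernel (X × A₁ × A₂) X) [IsMarkovKernel Q]
    -- ARAT transitions: additive densities w.r.t. `λ`
    (q₁ : X → X → A₁ → ℝ) (q₂ : X → X → A₂ → ℝ)
    (hq₁meas : Measurable fun r : X × X × A₁ => q₁ r.1 r.2.1 r.2.2)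
    (hq₂meas : Measurable fun r : X × X × A₂ => q₂ r.1 r.2.1 r.2.2)
    (hq₁pos : ∀ y x a, 0 ≤ q₁ y x a) (hq₂pos : ∀ y x a, 0 ≤ q₂ y x a)
    (hQdens : ∀ x a₁ a₂ D, MeasurableSet D →
      Q (x, a₁, a₂) D = ∫⁻ y in D, ENNReal.ofReal (q₁ y x a₁ + q₂ y x a₂) ∂lam)
    -- feasible-action correspondences
    (Fa₁ : X → Set A₁) (Fa₂ : X → Set A₂)
    (hFa₁meas : ∀ U : Set A₁, IsOpen U → MeasurableSet {x | (Fa₁ x ∩ U).Nonempty})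
    (hFa₂meas : ∀ U : Set A₂, IsOpen U → MeasurableSet {x | (Fa₂ x ∩ U).Nonempty})
    (hFa₁ne : ∀ x, (Fa₁ x).Nonempty) (hFa₂ne : ∀ x, (Fa₂ x).Nonempty)
    (hFa₁cpt : ∀ x, IsCompact (Fa₁ x)) (hFa₂cpt : ∀ x, IsCompact (Fa₂ x))
    -- history-dependent policies of the two players
    (π₁ : ∀ t, Kernel (Hist X A₁ A₂ t) A₁) (π₂ : ∀ t, Kernel (Hist X A₁ A₂ t) A₂)
    (hm₁ : ∀ t, IsMarkovKernel (π₁ t)) (hm₂ : ∀ t, IsMarkovKernel (π₂ t))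
    (hfeas₁ : ∀ t h, π₁ t h (Fa₁ (curState t h)) = 1)
    (hfeas₂ : ∀ t h, π₂ t h (Fa₂ (curState t h)) = 1) :
    -- existence of an equivalent pair of stationary Markov policies
    (∃ π₁' : Kernel X A₁, ∃ π₂' : Kernel X A₂, IsMarkovKernel π₁' ∧ IsMarkovKernel π₂' ∧
      (∀ x, π₁' x (Fa₁ x) = 1) ∧ (∀ x, π₂' x (Fa₂ x) = 1) ∧
      (occHD β η Q π₁ π₂).map (fun q => (q.1, q.2.1)) = occ1 β Q π₁' π₂' η ∧
      (occHD β η Q π₁ π₂).map (fun q => (q.1, q.2.2)) = occ2 β Q π₁' π₂' η) ∧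
    -- if player 1's policy is stationary Markov, it can be kept
    (∀ σ₁ : Kernel X A₁, IsMarkovKernel σ₁ →
      (∀ t, π₁ t = σ₁.comap (curState t) (measurable_curState t)) →
      ∃ π₂' : Kernel X A₂, IsMarkovKernel π₂' ∧ (∀ x, π₂' x (Fa₂ x) = 1) ∧
        (occHD β η Q π₁ π₂).map (fun q => (q.1, q.2.1)) = occ1 β Q σ₁ π₂' η ∧
        (occHD β η Q π₁ π₂).map (fun q => (q.1, q.2.2)) = occ2 β Q σ₁ π₂' η) ∧
    -- if player 2's policy is stationary Markov, it can be kept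
    (∀ σ₂ : Kernel X A₂, IsMarkovKernel σ₂ →
      (∀ t, π₂ t = σ₂.comap (curState t) (measurable_curState t)) →
      ∃ π₁' : Kernel X A₁, IsMarkovKernel π₁' ∧ (∀ x, π₁' x (Fa₁ x) = 1) ∧
        (occHD β η Q π₁ π₂).map (fun q => (q.1, q.2.1)) = occ1 β Q π₁' σ₂ η ∧
        (occHD β η Q π₁ π₂).map (fun q => (q.1, q.2.2)) = occ2 β Q π₁' σ₂ η) := by
  have hnX : Nonempty X := by
    by_contra h
    rw [not_nonempty_iff] at h
    have h1 := measure_univ (μ := η)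
    rw [Set.univ_eq_empty_iff.2 h] at h1
    simp at h1
  obtain ⟨x0⟩ := hnX
  haveI : Nonempty A₁ := ⟨(hFa₁ne x0).choose⟩
  haveI : Nonempty A₂ := ⟨(hFa₂ne x0).choose⟩
  haveI hμ : IsProbabilityMeasure (occHD β η Q π₁ π₂) :=
    occHD_prob η Q π₁ π₂ hm₁ hm₂ β hβ1
  have hm1meas : Measurable fun p : X × A₁ × A₂ => (p.1, p.2.1) :=
    measurable_fst.prodMk (measurable_fst.comp measurable_snd)
  have hm2meas : Measurable fun p : X × A₁ × A₂ => (p.1, p.2.2) :=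
    measurable_fst.prodMk (measurable_snd.comp measurable_snd)
  haveI : IsProbabilityMeasure
      ((occHD β η Q π₁ π₂).map (fun p : X × A₁ × A₂ => (p.1, p.2.1))) :=
    Measure.isProbabilityMeasure_map hm1meas.aemeasurable
  haveI : IsProbabilityMeasure
      ((occHD β η Q π₁ π₂).map (fun p : X × A₁ × A₂ => (p.1, p.2.2))) :=
    Measure.isProbabilityMeasure_map hm2meas.aemeasurable
  have hG₁ : MeasurableSet {p : X × A₁ | p.2 ∈ Fa₁ p.1} :=
    graph_meas Fa₁ hFa₁meas fun x => (hFa₁cpt x).isClosed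
  have hG₂ : MeasurableSet {p : X × A₂ | p.2 ∈ Fa₂ p.1} :=
    graph_meas Fa₂ hFa₂meas fun x => (hFa₂cpt x).isClosed
  have hfst1 : ((occHD β η Q π₁ π₂).map (fun p : X × A₁ × A₂ => (p.1, p.2.1))).fst
      = (occHD β η Q π₁ π₂).map Prod.fst := by
    rw [Measure.fst, Measure.map_map measurable_fst hm1meas]
    rfl
  have hfst2 : ((occHD β η Q π₁ π₂).map (fun p : X × A₁ × A₂ => (p.1, p.2.2))).fst
      = (occHD β η Q π₁ π₂).map Prod.fst := by
    rw [Measure.fst, Measure.map_map measurable_fst hm2meas]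
    rfl
  have hgr₁ : ((occHD β η Q π₁ π₂).map (fun p : X × A₁ × A₂ => (p.1, p.2.1)))
      {p : X × A₁ | p.2 ∈ Fa₁ p.1} = 1 :=
    occHD_graph₁ η Q π₁ π₂ hm₁ hm₂ β hβ1 Fa₁ hG₁ (fun x => rfl) hfeas₁
  have hgr₂ : ((occHD β η Q π₁ π₂).map (fun p : X × A₁ × A₂ => (p.1, p.2.2)))
      {p : X × A₂ | p.2 ∈ Fa₂ p.1} = 1 :=
    occHD_graph₂ η Q π₁ π₂ hm₁ hm₂ β hβ1 Fa₂ hG₂ (fun x => rfl) hfeas₂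
  haveI hmk₁0 : @IsMarkovKernel X A₁ _ _ (π₁ 0) := hm₁ 0
  haveI hmk₂0 : @IsMarkovKernel X A₂ _ _ (π₂ 0) := hm₂ 0
  obtain ⟨κ₁, hκ₁M, hκ₁feas, hκ₁eq⟩ :=
    exists_station Fa₁ hG₁
      ((occHD β η Q π₁ π₂).map (fun p : X × A₁ × A₂ => (p.1, p.2.1))) hgr₁
      (π₁ 0 : Kernel X A₁) (fun x => hfeas₁ 0 x)
  obtain ⟨κ₂, hκ₂M, hκ₂feas, hκ₂eq⟩ :=
    exists_station Fa₂ hG₂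
      ((occHD β η Q π₁ π₂).map (fun p : X × A₁ × A₂ => (p.1, p.2.2))) hgr₂
      (π₂ 0 : Kernel X A₂) (fun x => hfeas₂ 0 x)
  rw [hfst1] at hκ₁eq
  rw [hfst2] at hκ₂eq
  haveI := hκ₁M
  haveI := hκ₂M
  refine ⟨⟨κ₁, κ₂, hκ₁M, hκ₂M, hκ₁feas, hκ₂feas, ?_, ?_⟩, ?_, ?_⟩
  · exact (main_marginals β hβ1 η Q lam q₁ q₂ hq₁meas hq₂meas hq₁pos hq₂pos hQdens
      π₁ π₂ hm₁ hm₂ κ₁ κ₂ hκ₁eq hκ₂eq).1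
  · exact (main_marginals β hβ1 η Q lam q₁ q₂ hq₁meas hq₂meas hq₁pos hq₂pos hQdens
      π₁ π₂ hm₁ hm₂ κ₁ κ₂ hκ₁eq hκ₂eq).2
  · intro σ₁ hσ₁M hσ₁st
    haveI := hσ₁M
    have h1 := marg_stationary₁ η Q π₁ π₂ hm₁ hm₂ β hβ1 σ₁ hσ₁st
    exact ⟨κ₂, hκ₂M, hκ₂feas,
      (main_marginals β hβ1 η Q lam q₁ q₂ hq₁meas hq₂meas hq₁pos hq₂pos hQdens
        π₁ π₂ hm₁ hm₂ σ₁ κ₂ h1 hκ₂eq).1,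
      (main_marginals β hβ1 η Q lam q₁ q₂ hq₁meas hq₂meas hq₁pos hq₂pos hQdens
        π₁ π₂ hm₁ hm₂ σ₁ κ₂ h1 hκ₂eq).2⟩
  · intro σ₂ hσ₂M hσ₂st
    haveI := hσ₂M
    have h2 := marg_stationary₂ η Q π₁ π₂ hm₁ hm₂ β hβ1 σ₂ hσ₂st
    exact ⟨κ₁, hκ₁M, hκ₁feas,
      (main_marginals β hβ1 η Q lam q₁ q₂ hq₁meas hq₂meas hq₁pos hq₂pos hQdens
        π₁ π₂ hm₁ hm₂ κ₁ σ₂ hκ₁eq h2).1,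
      (main_marginals β hβ1 η Q lam q₁ q₂ hq₁meas hq₂meas hq₁pos hq₂pos hQdens
        π₁ π₂ hm₁ hm₂ κ₁ σ₂ hκ₁eq h2).2⟩
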